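/- Fix s ≥ 1, P_s = {a_1,…,a_s, c | a_i < c}, with μ the Möbius function of P_s^*. For 0 ≤ m ≤ n and any word w of length m consisting entirely of letters from {a_1,…,a_s}: μ(w, c^n) = μ(a_1^m, c^n) = (−1)^m μ(c^m, c^n) (with μ(c^0, c^n) interpreted as μ(∅, c^n)). -/

import Mathlib

/-- The alphabet `P_s = {a_1, …, a_s, c}` with `a_i < c`: `some i` is `a_i`, `none` is `c`. -/
abbrev Letter (s : ℕ) := Option (Fin s)

/-- The generalized subword order on words over `P_s`. -/
def WLE {s : ℕ} (u w : List (Letter s)) : Prop :=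
  ∃ w', w'.Sublist w ∧ List.Forall₂ (fun x y => x = y ∨ y = none) u w'

namespace MuAux

open List Finset

variable {s : ℕ}

lemma sublist_forall₂ {α : Type*} {R : α → α → Prop} :
    ∀ {l₂ l₃ : List α}, List.Forall₂ R l₂ l₃ → ∀ {l₁ : List α}, l₁.Sublist l₂ →
      ∃ l₄, l₄.Sublist l₃ ∧ List.Forall₂ R l₁ l₄ := by
  intro l₂ l₃ h
  induction h with
  | nil =>
    intro l₁ h1
    rw [List.sublist_nil.mp h1]
    exact ⟨[], List.Sublist.refl _, List.Forall₂.nil⟩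
  | @cons a b l l' hab h ih =>
    intro l₁ h1
    cases h1 with
    | cons _ h1 =>
      obtain ⟨l₄, h4, h5⟩ := ih h1
      exact ⟨l₄, h4.cons b, h5⟩
    | cons_cons _ h1 =>
      obtain ⟨l₄, h4, h5⟩ := ih h1
      exact ⟨b :: l₄, h4.cons₂ b, List.Forall₂.cons hab h5⟩

lemma forall₂_comp {u v w : List (Letter s)}
    (h1 : List.Forall₂ (fun x y => x = y ∨ y = none) u v)
    (h2 : List.Forall₂ (fun x y => x = y ∨ y = none) v w) :
    List.Forall₂ (fun x y => x = y ∨ y = none) u w := by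
  induction h1 generalizing w with
  | nil => cases h2; exact List.Forall₂.nil
  | @cons x y u' v' hxy h ih =>
    cases h2 with
    | cons hyz h2 =>
      refine List.Forall₂.cons ?_ (ih h2)
      rcases hxy with rfl | rfl
      · exact hyz
      · rcases hyz with rfl | rfl <;> exact Or.inr rfl

lemma wle_refl (u : List (Letter s)) : WLE u u :=
  ⟨u, List.Sublist.refl u, List.forall₂_same.mpr fun x _ => Or.inl rfl⟩

lemma wle_trans {u v w : List (Letter s)} (h1 : WLE u v) (h2 : WLE v w) : WLE u w := by
  obtain ⟨v₁, hs1, hf1⟩ := h1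
  obtain ⟨w₁, hs2, hf2⟩ := h2
  obtain ⟨w₂, hs3, hf3⟩ := sublist_forall₂ hf2 hs1
  exact ⟨w₂, hs3.trans hs2, forall₂_comp hf1 hf3⟩

lemma wle_length_le {u v : List (Letter s)} (h : WLE u v) : u.length ≤ v.length := by
  obtain ⟨w', hs, hf⟩ := h
  rw [hf.length_eq]
  exact hs.length_le

def cnt (z : List (Letter s)) : ℕ := z.countP (fun x => x.isNone)

lemma cnt_cons (x : Letter s) (z : List (Letter s)) :
    cnt (x :: z) = cnt z + if x.isNone then 1 else 0 := by
  simp [cnt, List.countP_cons]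

lemma forall₂_count_le {u w : List (Letter s)}
    (h : List.Forall₂ (fun x y => x = y ∨ y = none) u w) :
    cnt u ≤ cnt w := by
  induction h with
  | nil => simp
  | @cons x y u' w' hxy h ih =>
    simp only [cnt_cons]
    rcases hxy with rfl | rfl
    · split_ifs <;> omega
    · split_ifs <;> simp_all <;> omega

lemma forall₂_count_eq {u w : List (Letter s)}
    (h : List.Forall₂ (fun x y => x = y ∨ y = none) u w)
    (hc : cnt u = cnt w) : u = w := by
  induction h with
  | nil => rfl
  | @cons x y u' w' hxy h ih =>
    by_cases hxy' : x = y
    · subst hxy'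
      simp only [cnt_cons] at hc
      rw [ih (by omega)]
    · rcases hxy with rfl | rfl
      · exact absurd rfl hxy'
      · have := forall₂_count_le h
        simp only [cnt_cons] at hc
        have hx : (x.isNone : Bool) = false := by
          cases x
          · exact absurd rfl hxy'
          · rfl
        rw [hx] at hc
        simp at hc
        omega

lemma wle_count_le {u v : List (Letter s)} (h : WLE u v) :
    cnt u ≤ cnt v := by
  obtain ⟨w', hs, hf⟩ := h
  exact (forall₂_count_le hf).trans hs.countP_le

lemma wle_measure_lt {u z : List (Letter s)} (h : WLE u z) (hne : u ≠ z) :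
    u.length + cnt u < z.length + cnt z := by
  obtain ⟨w', hs, hf⟩ := h
  have h1 : u.length = w'.length := hf.length_eq
  have h2 : w'.length ≤ z.length := hs.length_le
  have h3 : cnt u ≤ cnt w' := forall₂_count_le hf
  have h4 : cnt w' ≤ cnt z := hs.countP_le
  rcases Nat.lt_or_ge (u.length + cnt u) (z.length + cnt z) with h | h
  · exact h
  · exfalso
    have hlen : w'.length = z.length := by omega
    have hwz : w' = z := hs.eq_of_length hlen
    subst hwz
    exact hne (forall₂_count_eq hf (by omega))

lemma wle_antisymm {u z : List (Letter s)} (h1 : WLE u z) (h2 : WLE z u) : u = z := by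
  by_contra hne
  have := wle_measure_lt h1 hne
  have := wle_measure_lt h2 (Ne.symm hne)
  omega

lemma wle_nil_left (z : List (Letter s)) : WLE [] z :=
  ⟨[], List.nil_sublist z, List.Forall₂.nil⟩

lemma not_wle_cons_nil {x : Letter s} {u : List (Letter s)} : ¬ WLE (x :: u) [] := by
  intro h
  have := wle_length_le h
  simp at this

lemma wle_cons_right {u z : List (Letter s)} (y : Letter s) (h : WLE u z) : WLE u (y :: z) := by
  obtain ⟨w', hs, hf⟩ := h
  exact ⟨w', hs.cons y, hf⟩

lemma wle_tail {x : Letter s} {u z : List (Letter s)} (h : WLE (x :: u) z) : WLE u z := by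
  obtain ⟨w', hs, hf⟩ := h
  cases hf with
  | cons hxy hf' =>
    rename_i b w₂
    exact ⟨w₂, ((List.Sublist.refl w₂).cons b).trans hs, hf'⟩

lemma wle_cons_cons {x y : Letter s} {u z : List (Letter s)}
    (hm : x = y ∨ y = none) (h : WLE u z) : WLE (x :: u) (y :: z) := by
  obtain ⟨w', hs, hf⟩ := h
  exact ⟨y :: w', hs.cons₂ y, List.Forall₂.cons hm hf⟩

lemma wle_cons_iff {x y : Letter s} {u z : List (Letter s)} :
    WLE (x :: u) (y :: z) ↔
      (if x = y ∨ y = none then WLE u z else WLE (x :: u) z) := by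
  constructor
  · rintro ⟨w', hs, hf⟩
    cases hf with
    | cons hxy hf' =>
      rename_i b w₂
      cases hs with
      | cons _ hs' =>
        have h2 : WLE (x :: u) z := ⟨b :: w₂, hs', List.Forall₂.cons hxy hf'⟩
        split_ifs with hm
        · exact wle_tail h2
        · exact h2
      | cons_cons _ hs' =>
        have h2 : WLE u z := ⟨w₂, hs', hf'⟩
        split_ifs with hm
        · exact h2
        · exact absurd hxy hm
  · intro h
    split_ifs at h with hm
    · exact wle_cons_cons hm h
    · exact wle_cons_right y h

lemma forall₂_replicate (u : List (Letter s)) :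
    List.Forall₂ (fun x y => x = y ∨ y = none) u (List.replicate u.length none) := by
  induction u with
  | nil => exact List.Forall₂.nil
  | cons x u ih =>
    rw [List.length_cons, List.replicate_succ]
    exact List.Forall₂.cons (Or.inr rfl) ih

lemma wle_replicate_iff {u : List (Letter s)} {n : ℕ} :
    WLE u (List.replicate n none) ↔ u.length ≤ n := by
  constructor
  · intro h
    have := wle_length_le h
    simpa using this
  · intro h
    exact ⟨List.replicate u.length none,
      (List.replicate_sublist_replicate none).mpr h, forall₂_replicate u⟩

/-- All words of length `ℓ`. -/
def WS : ℕ → Finset (List (Letter s))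
  | 0 => {[]}
  | (ℓ+1) => ((Finset.univ : Finset (Letter s)) ×ˢ WS ℓ).image (fun p => p.1 :: p.2)

lemma mem_WS {ℓ : ℕ} {z : List (Letter s)} : z ∈ (WS ℓ : Finset (List (Letter s))) ↔ z.length = ℓ := by
  induction ℓ generalizing z with
  | zero => cases z <;> simp [WS]
  | succ ℓ ih =>
    cases z with
    | nil => simp [WS]
    | cons y z' =>
      simp only [WS, Finset.mem_image, Finset.mem_product, Finset.mem_univ, true_and,
        List.length_cons, Nat.add_left_inj, Prod.exists]
      constructor
      · rintro ⟨a, b, hb, heq⟩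
        obtain ⟨rfl, rfl⟩ : a = y ∧ b = z' := by
          constructor <;> [exact (List.cons.injEq .. ▸ heq).1; exact (List.cons.injEq .. ▸ heq).2]
        exact ih.mp hb
      · intro hz
        exact ⟨y, z', ih.mpr hz, rfl⟩

def w1 (x : Letter s) : ℤ := if x.isNone then 1 else -1

def wgt (z : List (Letter s)) : ℤ := (z.map w1).prod

@[simp] lemma wgt_nil : wgt ([] : List (Letter s)) = 1 := rfl

@[simp] lemma wgt_cons (y : Letter s) (z : List (Letter s)) :
    wgt (y :: z) = w1 y * wgt z := by simp [wgt]

open scoped Classical in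
noncomputable def SS (u : List (Letter s)) (ℓ : ℕ) : ℤ :=
  ∑ z ∈ WS ℓ, if WLE u z then wgt z else 0

open scoped Classical in
lemma SS_succ (x : Letter s) (u : List (Letter s)) (ℓ : ℕ) :
    SS (x :: u) (ℓ + 1) =
      ∑ y : Letter s, (if x = y ∨ y = none then w1 y * SS u ℓ else w1 y * SS (x :: u) ℓ) := by
  rw [SS, WS]
  rw [Finset.sum_image (by rintro ⟨a, b⟩ - ⟨a', b'⟩ - h; simpa [Prod.ext_iff] using h)]
  rw [Finset.sum_product]
  refine Finset.sum_congr rfl fun y _ => ?_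
  split_ifs with hm
  · rw [SS, Finset.mul_sum]
    refine Finset.sum_congr rfl fun z hz => ?_
    rw [wle_cons_iff, if_pos hm, wgt_cons]
    split_ifs <;> ring
  · rw [SS, Finset.mul_sum]
    refine Finset.sum_congr rfl fun z hz => ?_
    rw [wle_cons_iff, if_neg hm, wgt_cons]
    split_ifs <;> ring

open scoped Classical in
lemma SS_zero_of_cons {x : Letter s} {u : List (Letter s)} :
    SS (x :: u) 0 = 0 := by
  simp [SS, WS, not_wle_cons_nil]

lemma SS_a (i : Fin s) (u : List (Letter s)) : ∀ ℓ, SS (some i :: u) ℓ = 0 := by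
  intro ℓ
  induction ℓ with
  | zero => exact SS_zero_of_cons
  | succ ℓ ih =>
    rw [SS_succ]
    rw [Fintype.sum_option]
    have hnone : ((some i : Letter s) = none ∨ (none : Letter s) = none) := Or.inr rfl
    rw [if_pos hnone]
    have : ∀ j : Fin s,
        (if (some i : Letter s) = some j ∨ (some j : Letter s) = none
          then w1 (some j) * SS u ℓ else w1 (some j) * SS (some i :: u) ℓ)
        = if i = j then -SS u ℓ else 0 := by
      intro j
      by_cases hij : i = j
      · subst hij
        rw [if_pos (Or.inl rfl), if_pos rfl]
        simp [w1]
      · rw [if_neg (by simp [hij]), if_neg hij, ih]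
        ring
    rw [Finset.sum_congr rfl fun j _ => this j]
    rw [Finset.sum_ite_eq (Finset.univ : Finset (Fin s)) i (fun _ => -SS u ℓ)]
    simp [w1]

lemma SS_c {u : List (Letter s)} (h : ∀ ℓ, SS u ℓ = 0) :
    ∀ ℓ, SS ((none : Letter s) :: u) ℓ = 0 := by
  intro ℓ
  induction ℓ with
  | zero => exact SS_zero_of_cons
  | succ ℓ ih =>
    rw [SS_succ, Fintype.sum_option]
    rw [if_pos (Or.inr rfl)]
    have : ∀ j : Fin s,
        (if (none : Letter s) = some j ∨ (some j : Letter s) = none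
          then w1 (some j) * SS u ℓ else w1 (some j) * SS ((none : Letter s) :: u) ℓ)
        = 0 := by
      intro j
      rw [if_neg (by simp), ih]
      ring
    rw [Finset.sum_congr rfl fun j _ => this j]
    simp [w1, h ℓ]

lemma SS_key {u : List (Letter s)} (h : ∃ x ∈ u, x ≠ none) :
    ∀ ℓ, SS u ℓ = 0 := by
  induction u with
  | nil => simp at h
  | cons x u ih =>
    cases x with
    | some i => exact SS_a i u
    | none =>
      refine SS_c (ih ?_)
      obtain ⟨x, hx, hxn⟩ := h
      rcases hx with _ | hx
      · exact absurd rfl hxn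
      · exact ⟨x, by assumption, hxn⟩
/-- All words of length at most `n`. -/
def QF (s n : ℕ) : Finset (List (Letter s)) := (Finset.range (n+1)).biUnion WS

lemma mem_QF {n : ℕ} {z : List (Letter s)} : z ∈ QF s n ↔ z.length ≤ n := by
  simp only [QF, Finset.mem_biUnion, Finset.mem_range, Nat.lt_succ_iff, mem_WS]
  constructor
  · rintro ⟨ℓ, hℓ, rfl⟩; exact hℓ
  · intro h; exact ⟨z.length, h, rfl⟩

lemma sum_QF {n : ℕ} (f : List (Letter s) → ℤ) :
    ∑ z ∈ QF s n, f z = ∑ ℓ ∈ Finset.range (n+1), ∑ z ∈ WS ℓ, f z := by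
  refine Finset.sum_biUnion ?_
  intro ℓ₁ _ ℓ₂ _ hne
  simp only [Finset.disjoint_left]
  intro z hz1 hz2
  exact hne (by rw [← mem_WS.mp hz1, ← mem_WS.mp hz2])

open scoped Classical in
lemma mu_formula {n : ℕ} (μ : List (Letter s) → List (Letter s) → ℤ)
    (hrefl : ∀ u, μ u u = 1)
    (hnle : ∀ u v, ¬ WLE u v → μ u v = 0)
    (hsum : ∀ u v, WLE u v → u ≠ v →
      ∑ᶠ z ∈ {z : List (Letter s) | WLE u z ∧ WLE z v}, μ u z = 0) :
    ∀ u : List (Letter s), u.length ≤ n →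
      μ u (List.replicate n none) =
        wgt u * μ (List.replicate u.length none) (List.replicate n none) := by
  set Q := QF s n with hQ
  let M : Matrix Q Q ℤ := fun u v => μ u.1 v.1
  let Z : Matrix Q Q ℤ := fun u v => if WLE u.1 v.1 then 1 else 0
  have hMZ : M * Z = 1 := by
    ext u v
    rw [Matrix.mul_apply, Matrix.one_apply]
    have hterm : ∀ z : Q, M u z * Z z v =
        (if WLE u.1 z.1 ∧ WLE z.1 v.1 then μ u.1 z.1 else 0) := by
      intro z
      by_cases h1 : WLE u.1 z.1
      · by_cases h2 : WLE z.1 v.1 <;> simp [M, Z, h1, h2]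
      · by_cases h2 : WLE z.1 v.1 <;> simp [M, Z, h1, h2, hnle _ _ h1]
    rw [Finset.sum_congr rfl fun z _ => hterm z]
    rw [Finset.sum_coe_sort Q (fun z => if WLE u.1 z ∧ WLE z v.1 then μ u.1 z else 0)]
    rw [← Finset.sum_filter]
    by_cases huv : u.1 = v.1
    · have huv' : u = v := Subtype.ext huv
      have hfil : Q.filter (fun z => WLE u.1 z ∧ WLE z v.1) = {u.1} := by
        ext z
        simp only [Finset.mem_filter, Finset.mem_singleton]
        constructor
        · rintro ⟨hzQ, h1, h2⟩
          exact (wle_antisymm h1 (huv ▸ h2)).symm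
        · rintro rfl
          exact ⟨u.2, wle_refl _, huv ▸ wle_refl _⟩
      rw [hfil, Finset.sum_singleton, hrefl, if_pos huv']
    · have hne : u ≠ v := fun h => huv (congrArg Subtype.val h)
      rw [if_neg hne]
      by_cases hle : WLE u.1 v.1
      · have hs0 := hsum u.1 v.1 hle huv
        have hset : {z : List (Letter s) | WLE u.1 z ∧ WLE z v.1}
            = ↑(Q.filter fun z => WLE u.1 z ∧ WLE z v.1) := by
          ext z
          simp only [Set.mem_setOf_eq, Finset.coe_filter, Set.mem_setOf_eq, Finset.mem_coe]
          constructor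
          · intro hz
            exact ⟨mem_QF.mpr ((wle_length_le hz.2).trans (mem_QF.mp v.2)), hz⟩
          · exact fun h => h.2
        rw [hset, finsum_mem_coe_finset] at hs0
        exact hs0
      · have hfil : Q.filter (fun z => WLE u.1 z ∧ WLE z v.1) = ∅ := by
          refine Finset.filter_eq_empty_iff.mpr ?_
          rintro z hz ⟨h1, h2⟩
          exact hle (wle_trans h1 h2)
        rw [hfil, Finset.sum_empty]
  have hZM : Z * M = 1 := mul_eq_one_comm.mp hMZ
  have H : ∀ (k : ℕ) (u : List (Letter s)), u.length ≤ n →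
      2*n - (u.length + cnt u) = k →
      μ u (List.replicate n none) =
        wgt u * μ (List.replicate u.length none) (List.replicate n none) := by
    intro k
    induction k using Nat.strong_induction_on with
    | _ k ih =>
    intro u hu hk
    by_cases hall : ∀ x ∈ u, x = (none : Letter s)
    · have hu' : u = List.replicate u.length none := List.eq_replicate_iff.mpr ⟨rfl, hall⟩
      have hwgt : wgt u = 1 := by
        conv_lhs => rw [hu']
        rw [wgt, List.map_replicate]
        simp [w1]
      rw [hwgt, one_mul]
      conv_lhs => rw [hu']
    · push_neg at hall
      have hne : u ≠ List.replicate n none := by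
        rintro rfl
        obtain ⟨x, hx, hxn⟩ := hall
        exact hxn (List.eq_of_mem_replicate hx)
      have uQ : u ∈ Q := mem_QF.mpr hu
      have vQ : List.replicate n (none : Letter s) ∈ Q := mem_QF.mpr (by simp)
      set U : Q := ⟨u, uQ⟩ with hU
      set V : Q := ⟨List.replicate n none, vQ⟩ with hV
      have h0 : (Z * M) U V = (1 : Matrix Q Q ℤ) U V := by rw [hZM]
      rw [Matrix.mul_apply, Matrix.one_apply,
        if_neg (fun h => hne (congrArg Subtype.val h))] at h0
      set g : List (Letter s) → ℤ :=
        fun z => if WLE u z then μ z (List.replicate n none) else 0 with hg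
      have hterm : ∀ z : Q, Z U z * M z V = g z.1 := by
        intro z
        by_cases h1 : WLE u z.1 <;> simp [Z, M, g, h1, hU, hV]
      rw [Finset.sum_congr rfl (fun z _ => hterm z), Finset.sum_coe_sort Q g] at h0
      set f : List (Letter s) → ℤ := fun z =>
        if WLE u z then wgt z * μ (List.replicate z.length none) (List.replicate n none)
        else 0 with hf
      have hfg : ∀ z ∈ Q.erase u, g z = f z := by
        intro z hz
        obtain ⟨hzne, hzQ⟩ := Finset.mem_erase.mp hz
        by_cases h1 : WLE u z
        · have hlt := wle_measure_lt h1 (Ne.symm hzne)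
          have hz2n : cnt z ≤ z.length := List.countP_le_length
          have hzn : z.length ≤ n := mem_QF.mp hzQ
          have hrec := ih (2*n - (z.length + cnt z)) (by omega) z hzn rfl
          simp only [hg, hf, if_pos h1]
          exact hrec
        · simp [hg, hf, h1]
      have hsumf : ∑ z ∈ Q, f z = 0 := by
        rw [hQ, sum_QF]
        refine Finset.sum_eq_zero fun ℓ hℓ => ?_
        have hc : ∀ z ∈ (WS ℓ : Finset (List (Letter s))), f z =
            (if WLE u z then wgt z else 0) *
              μ (List.replicate ℓ none) (List.replicate n none) := by
          intro z hz
          simp only [hf]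
          rw [mem_WS.mp hz]
          split_ifs <;> ring
        rw [Finset.sum_congr rfl hc, ← Finset.sum_mul]
        have : (∑ z ∈ (WS ℓ : Finset (List (Letter s))), if WLE u z then wgt z else 0)
            = SS u ℓ := rfl
        rw [this, SS_key hall ℓ, zero_mul]
      have h1 : g u + ∑ z ∈ Q.erase u, g z = 0 := by
        rw [Finset.add_sum_erase Q g uQ]; exact h0
      have h2 : f u + ∑ z ∈ Q.erase u, f z = 0 := by
        rw [Finset.add_sum_erase Q f uQ]; exact hsumf
      have h3 : ∑ z ∈ Q.erase u, g z = ∑ z ∈ Q.erase u, f z := Finset.sum_congr rfl hfg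
      have hgu : g u = μ u (List.replicate n none) := by
        simp only [hg]; rw [if_pos (wle_refl u)]
      have hfu : f u = wgt u * μ (List.replicate u.length none) (List.replicate n none) := by
        simp only [hf]; rw [if_pos (wle_refl u)]
      rw [← hgu, ← hfu]
      omega
  intro u hu
  exact H (2*n - (u.length + cnt u)) u hu rfl

lemma wgt_all_a {w : List (Letter s)} (h : ∀ x ∈ w, x ≠ none) :
    wgt w = (-1 : ℤ) ^ w.length := by
  induction w with
  | nil => simp
  | cons x w ih =>
    have hx : (x.isNone : Bool) = false := by
      cases x
      · exact absurd rfl (h _ (List.mem_cons_self))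
      · rfl
    rw [wgt_cons, ih fun y hy => h y (List.mem_cons_of_mem _ hy), w1, hx]
    simp [pow_succ]

end MuAux

/-- For `0 ≤ m ≤ n` and any word `w` of length `m` all of whose letters lie in
`{a_1, …, a_s}`: `μ(w, c^n) = μ(a_1^m, c^n) = (−1)^m μ(c^m, c^n)`. -/
theorem mu_a_words (s : ℕ) (hs : 1 ≤ s)
    (μ : List (Letter s) → List (Letter s) → ℤ)
    (hrefl : ∀ u, μ u u = 1)
    (hnle : ∀ u v, ¬ WLE u v → μ u v = 0)
    (hsum : ∀ u v, WLE u v → u ≠ v → ∑ᶠ z ∈ {z : List (Letter s) | WLE u z ∧ WLE z v}, μ u z = 0)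
    (m n : ℕ) (hmn : m ≤ n) (w : List (Letter s)) (hw : w.length = m)
    (hwa : ∀ x ∈ w, x ≠ (none : Letter s)) :
    μ w (List.replicate n (none : Letter s)) =
        μ (List.replicate m (some (⟨0, hs⟩ : Fin s) : Letter s))
          (List.replicate n (none : Letter s)) ∧
      μ (List.replicate m (some (⟨0, hs⟩ : Fin s) : Letter s))
          (List.replicate n (none : Letter s)) =
        (-1 : ℤ) ^ m * μ (List.replicate m (none : Letter s)) (List.replicate n (none : Letter s)) := by
  have main := MuAux.mu_formula (n := n) μ hrefl hnle hsum
  have hW : μ w (List.replicate n none) =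
      (-1 : ℤ) ^ m * μ (List.replicate m none) (List.replicate n none) := by
    have := main w (hw ▸ hmn)
    rw [MuAux.wgt_all_a hwa, hw] at this
    exact this
  set a : Letter s := some (⟨0, hs⟩ : Fin s) with ha
  have hA : μ (List.replicate m a) (List.replicate n none) =
      (-1 : ℤ) ^ m * μ (List.replicate m none) (List.replicate n none) := by
    have hlen : (List.replicate m a).length = m := List.length_replicate
    have := main (List.replicate m a) (by rw [hlen]; exact hmn)
    rw [MuAux.wgt_all_a (fun x hx => by
      rw [List.eq_of_mem_replicate hx]; simp [ha]), hlen] at this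
    exact this
  exact ⟨hW.trans hA.symm, hA⟩
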